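/- Let (Ω₁, μ₁), (Ω₂, μ₂), (Ω₃, μ₃) be measure spaces. Let (f_j), (h_k') be sequences of bounded measurable functions on Ω₁ and Ω₃ respectively, and (f_j'), (h_k) sequences in L²(μ₂), with Σ_j ‖f_j‖_∞‖f_j'‖₂ < ∞ and Σ_k ‖h_k‖₂‖h_k'‖_∞ < ∞. Define K₁(x,y) = Σ_j f_j(x)f_j'(y) and K₂(y,z) = Σ_k h_k(y)h_k'(z) (the series converging absolutely pointwise). Then for all x ∈ Ω₁, z ∈ Ω₃ the function y ↦ K₁(x,y)·K₂(y,z) is integrable on Ω₂, and ∫_{Ω₂} K₁(x,y) K₂(y,z) dμ₂(y) = Σ_{j,k} (∫ f_j' h_k dμ₂) · f_j(x) h_k'(z), with Σ_{j,k} |∫ f_j' h_k dμ₂|·‖f_j‖_∞·‖h_k'‖_∞ < ∞. -/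

import Mathlib

open MeasureTheory Filter Topology
open scoped ENNReal NNReal

set_option maxHeartbeats 1600000


lemma holder_two {Ω : Type*} [MeasurableSpace Ω] {μ : Measure Ω} {u v : Ω → ℂ}
    (hu : AEStronglyMeasurable u μ) (hv : AEStronglyMeasurable v μ) :
    ∫⁻ y, (‖u y‖₊ : ℝ≥0∞) * ‖v y‖₊ ∂μ ≤ eLpNorm u 2 μ * eLpNorm v 2 μ := by
  have hpq : Real.HolderConjugate 2 2 := Real.HolderConjugate.two_two
  have H := ENNReal.lintegral_mul_le_Lp_mul_Lq μ hpq hu.enorm hv.enorm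
  rw [eLpNorm_eq_lintegral_rpow_enorm_toReal two_ne_zero ENNReal.ofNat_ne_top,
      eLpNorm_eq_lintegral_rpow_enorm_toReal two_ne_zero ENNReal.ofNat_ne_top]
  simp at H ⊢
  exact H

lemma ae_tsum_enorm_ne_top {Ω : Type*} [MeasurableSpace Ω] {μ : Measure Ω} (g : ℕ → Ω → ℂ)
    (hg : ∀ j, AEStronglyMeasurable (g j) μ) (c : ℕ → ℝ≥0∞)
    (hC : ∑' j, c j * eLpNorm (g j) 2 μ ≠ ∞) :
    ∀ᵐ y ∂μ, ∑' j, c j * (‖g j y‖₊ : ℝ≥0∞) ≠ ∞ := by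
  have hAm : ∀ j : ℕ, AEMeasurable (fun y => c j * (‖g j y‖₊ : ℝ≥0∞)) μ :=
    fun j => (hg j).enorm.const_mul (c j)
  have hGm : AEMeasurable (fun y => ∑' j, c j * (‖g j y‖₊ : ℝ≥0∞)) μ :=
    AEMeasurable.ennreal_tsum hAm
  have h1 : ∀ y, (∑' j, c j * (‖g j y‖₊ : ℝ≥0∞)) * (∑' j, c j * (‖g j y‖₊ : ℝ≥0∞))
      = ∑' p : ℕ × ℕ, (c p.1 * (‖g p.1 y‖₊ : ℝ≥0∞)) * (c p.2 * (‖g p.2 y‖₊ : ℝ≥0∞)) := by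
    intro y
    rw [ENNReal.tsum_prod']
    simp_rw [ENNReal.tsum_mul_left]
    rw [ENNReal.tsum_mul_right]
  have key : ∫⁻ y, (∑' j, c j * (‖g j y‖₊ : ℝ≥0∞)) * (∑' j, c j * (‖g j y‖₊ : ℝ≥0∞)) ∂μ
      ≤ (∑' j, c j * eLpNorm (g j) 2 μ) * (∑' j, c j * eLpNorm (g j) 2 μ) := by
    calc ∫⁻ y, (∑' j, c j * (‖g j y‖₊ : ℝ≥0∞)) * (∑' j, c j * (‖g j y‖₊ : ℝ≥0∞)) ∂μ
        = ∑' p : ℕ × ℕ, ∫⁻ y, (c p.1 * (‖g p.1 y‖₊ : ℝ≥0∞)) * (c p.2 * (‖g p.2 y‖₊ : ℝ≥0∞)) ∂μ := by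
          simp_rw [h1]
          exact lintegral_tsum fun p => (hAm p.1).mul (hAm p.2)
      _ ≤ ∑' p : ℕ × ℕ, (c p.1 * eLpNorm (g p.1) 2 μ) * (c p.2 * eLpNorm (g p.2) 2 μ) := by
          refine ENNReal.tsum_le_tsum fun p => ?_
          have e1 : ∀ y, (c p.1 * (‖g p.1 y‖₊ : ℝ≥0∞)) * (c p.2 * (‖g p.2 y‖₊ : ℝ≥0∞))
              = (c p.1 * c p.2) * ((‖g p.1 y‖₊ : ℝ≥0∞) * (‖g p.2 y‖₊ : ℝ≥0∞)) := fun y => by ring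
          simp_rw [e1]
          rw [lintegral_const_mul'' (f := fun y => (‖g p.1 y‖₊ : ℝ≥0∞) * (‖g p.2 y‖₊ : ℝ≥0∞)) _ ((hg p.1).enorm.mul (hg p.2).enorm)]
          calc c p.1 * c p.2 * ∫⁻ y, (‖g p.1 y‖₊ : ℝ≥0∞) * (‖g p.2 y‖₊ : ℝ≥0∞) ∂μ
              ≤ c p.1 * c p.2 * (eLpNorm (g p.1) 2 μ * eLpNorm (g p.2) 2 μ) := by
                gcongr
                exact holder_two (hg p.1) (hg p.2)
            _ = _ := by ring
      _ = _ := by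
          rw [ENNReal.tsum_prod']
          simp_rw [ENNReal.tsum_mul_left]
          rw [ENNReal.tsum_mul_right]
  have hfin : ∫⁻ y, (∑' j, c j * (‖g j y‖₊ : ℝ≥0∞)) * (∑' j, c j * (‖g j y‖₊ : ℝ≥0∞)) ∂μ ≠ ∞ :=
    (key.trans_lt (ENNReal.mul_lt_top hC.lt_top hC.lt_top)).ne
  filter_upwards [ae_lt_top' (hGm.mul hGm) hfin] with y hy htop
  rw [Pi.mul_apply, htop, ENNReal.top_mul_top] at hy
  exact (lt_irrefl _ hy).elim

/-- Continuous matrix multiplication of kernels: if `K₁(x,y) = Σ_j f_j(x)f'_j(y)` and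
`K₂(y,z) = Σ_k h_k(y)h'_k(z)` with `f_j, h'_k` bounded measurable and `f'_j, h_k ∈ L²(μ₂)`
with summable products of norms, then `y ↦ K₁(x,y)K₂(y,z)` is integrable for all `x, z`,
the integral equals the double series `Σ_{j,k} (∫ f'_j h_k) f_j(x) h'_k(z)`, and this
double series is absolutely summable against the sup-norm bounds. -/
theorem kernel_composition_integral
    {Ω₁ Ω₂ Ω₃ : Type _} [MeasurableSpace Ω₁] [MeasurableSpace Ω₂] [MeasurableSpace Ω₃]
    (μ₂ : Measure Ω₂)
    (f : ℕ → Ω₁ → ℂ) (f' : ℕ → Ω₂ → ℂ) (h : ℕ → Ω₂ → ℂ) (h' : ℕ → Ω₃ → ℂ)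
    (Mf Mh' : ℕ → ℝ)
    (hfm : ∀ j, Measurable (f j)) (hh'm : ∀ k, Measurable (h' k))
    (hMf : ∀ j x, ‖f j x‖ ≤ Mf j) (hMh' : ∀ k z, ‖h' k z‖ ≤ Mh' k)
    (hf' : ∀ j, MemLp (f' j) 2 μ₂) (hh : ∀ k, MemLp (h k) 2 μ₂)
    (hs1 : Summable fun j => Mf j * (eLpNorm (f' j) 2 μ₂).toReal)
    (hs2 : Summable fun k => (eLpNorm (h k) 2 μ₂).toReal * Mh' k) :
    (∀ (x : Ω₁) (z : Ω₃),
      Integrable (fun y => (∑' j, f j x * f' j y) * (∑' k, h k y * h' k z)) μ₂) ∧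
    (∀ (x : Ω₁) (z : Ω₃),
      ∫ y, (∑' j, f j x * f' j y) * (∑' k, h k y * h' k z) ∂μ₂
        = ∑' p : ℕ × ℕ, (∫ y, f' p.1 y * h p.2 y ∂μ₂) * (f p.1 x * h' p.2 z)) ∧
    Summable (fun p : ℕ × ℕ =>
      ‖∫ y, f' p.1 y * h p.2 y ∂μ₂‖ * Mf p.1 * Mh' p.2) := by
  have hE1 : ∀ j, eLpNorm (f' j) 2 μ₂ ≠ ∞ := fun j => (hf' j).2.ne
  have hE2 : ∀ k, eLpNorm (h k) 2 μ₂ ≠ ∞ := fun k => (hh k).2.ne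
  set a : ℕ → ℝ≥0∞ := fun j => ENNReal.ofReal |Mf j| with ha
  set b : ℕ → ℝ≥0∞ := fun k => ENNReal.ofReal |Mh' k| with hb
  have hsum1 : Summable fun j => |Mf j| * (eLpNorm (f' j) 2 μ₂).toReal := by
    have := summable_abs_iff.mpr hs1
    simpa [abs_mul, abs_of_nonneg ENNReal.toReal_nonneg] using this
  have hsum2 : Summable fun k => |Mh' k| * (eLpNorm (h k) 2 μ₂).toReal := by
    have := summable_abs_iff.mpr hs2
    simpa [abs_mul, abs_of_nonneg ENNReal.toReal_nonneg, mul_comm] using this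
  have hC1 : ∑' j, a j * eLpNorm (f' j) 2 μ₂ ≠ ∞ := by
    have e : ∀ j, a j * eLpNorm (f' j) 2 μ₂
        = ENNReal.ofReal (|Mf j| * (eLpNorm (f' j) 2 μ₂).toReal) := fun j => by
      rw [ENNReal.ofReal_mul (abs_nonneg _), ENNReal.ofReal_toReal (hE1 j)]
    simp_rw [e]
    rw [← ENNReal.ofReal_tsum_of_nonneg
      (fun j => mul_nonneg (abs_nonneg _) ENNReal.toReal_nonneg) hsum1]
    exact ENNReal.ofReal_ne_top
  have hC2 : ∑' k, b k * eLpNorm (h k) 2 μ₂ ≠ ∞ := by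
    have e : ∀ k, b k * eLpNorm (h k) 2 μ₂
        = ENNReal.ofReal (|Mh' k| * (eLpNorm (h k) 2 μ₂).toReal) := fun k => by
      rw [ENNReal.ofReal_mul (abs_nonneg _), ENNReal.ofReal_toReal (hE2 k)]
    simp_rw [e]
    rw [← ENNReal.ofReal_tsum_of_nonneg
      (fun k => mul_nonneg (abs_nonneg _) ENNReal.toReal_nonneg) hsum2]
    exact ENNReal.ofReal_ne_top
  have hae1 : ∀ᵐ y ∂μ₂, ∑' j, a j * (‖f' j y‖₊ : ℝ≥0∞) ≠ ∞ :=
    ae_tsum_enorm_ne_top f' (fun j => (hf' j).1) a hC1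
  have hae2 : ∀ᵐ y ∂μ₂, ∑' k, b k * (‖h k y‖₊ : ℝ≥0∞) ≠ ∞ :=
    ae_tsum_enorm_ne_top h (fun k => (hh k).1) b hC2
  -- Cauchy-Schwarz bound on the scalar products
  have hInt : ∀ j k, ‖∫ y, f' j y * h k y ∂μ₂‖
      ≤ (eLpNorm (f' j) 2 μ₂).toReal * (eLpNorm (h k) 2 μ₂).toReal := by
    intro j k
    have h1 : ‖∫ y, f' j y * h k y ∂μ₂‖ ≤ (∫⁻ y, (‖f' j y‖₊ : ℝ≥0∞) * ‖h k y‖₊ ∂μ₂).toReal := by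
      refine (norm_integral_le_lintegral_norm _).trans_eq ?_
      congr 1
      refine lintegral_congr fun y => ?_
      rw [ofReal_norm, enorm_eq_nnnorm, nnnorm_mul, ENNReal.coe_mul]
    refine h1.trans ?_
    rw [← ENNReal.toReal_mul]
    exact ENNReal.toReal_mono (ENNReal.mul_ne_top (hE1 j) (hE2 k))
      (holder_two (hf' j).1 (hh k).1)
  have key : ∀ (x : Ω₁) (z : Ω₃),
      Integrable (fun y => (∑' j, f j x * f' j y) * (∑' k, h k y * h' k z)) μ₂ ∧
      ∫ y, (∑' j, f j x * f' j y) * (∑' k, h k y * h' k z) ∂μ₂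
        = ∑' p : ℕ × ℕ, (∫ y, f' p.1 y * h p.2 y ∂μ₂) * (f p.1 x * h' p.2 z) := by
    intro x z
    have haeS1 : ∀ᵐ y ∂μ₂, Summable fun j => ‖f j x * f' j y‖ := by
      filter_upwards [hae1] with y hy
      have hs := ENNReal.summable_toReal hy
      have hs' : Summable fun j => |Mf j| * ‖f' j y‖ := by
        simpa [ENNReal.toReal_mul, ha, ENNReal.toReal_ofReal, abs_nonneg, coe_nnnorm] using hs
      refine hs'.of_nonneg_of_le (fun j => norm_nonneg _) fun j => ?_
      rw [norm_mul]
      exact mul_le_mul_of_nonneg_right ((hMf j x).trans (le_abs_self _)) (norm_nonneg _)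
    have haeS2 : ∀ᵐ y ∂μ₂, Summable fun k => ‖h k y * h' k z‖ := by
      filter_upwards [hae2] with y hy
      have hs := ENNReal.summable_toReal hy
      have hs' : Summable fun k => |Mh' k| * ‖h k y‖ := by
        simpa [ENNReal.toReal_mul, hb, ENNReal.toReal_ofReal, abs_nonneg, coe_nnnorm] using hs
      refine hs'.of_nonneg_of_le (fun k => norm_nonneg _) fun k => ?_
      rw [norm_mul, mul_comm]
      exact mul_le_mul_of_nonneg_right ((hMh' k z).trans (le_abs_self _)) (norm_nonneg _)
    have hTm : ∀ p : ℕ × ℕ, AEStronglyMeasurable (fun y => (f p.1 x * f' p.1 y) * (h p.2 y * h' p.2 z)) μ₂ := fun p =>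
      ((hf' p.1).1.const_mul _).mul ((hh p.2).1.mul_const _)
    have hTb : ∀ p : ℕ × ℕ, ∫⁻ y, (‖(f p.1 x * f' p.1 y) * (h p.2 y * h' p.2 z)‖₊ : ℝ≥0∞) ∂μ₂
        ≤ (a p.1 * eLpNorm (f' p.1) 2 μ₂) * (b p.2 * eLpNorm (h p.2) 2 μ₂) := by
      intro p
      have h1 : ∀ y, (‖(f p.1 x * f' p.1 y) * (h p.2 y * h' p.2 z)‖₊ : ℝ≥0∞)
          ≤ (a p.1 * b p.2) * ((‖f' p.1 y‖₊ : ℝ≥0∞) * ‖h p.2 y‖₊) := by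
        intro y
        have e : (‖(f p.1 x * f' p.1 y) * (h p.2 y * h' p.2 z)‖₊ : ℝ≥0∞)
            = ((‖f p.1 x‖₊ : ℝ≥0∞) * ‖h' p.2 z‖₊) * ((‖f' p.1 y‖₊ : ℝ≥0∞) * ‖h p.2 y‖₊) := by
          simp only [nnnorm_mul, ENNReal.coe_mul]
          ring
        rw [e]
        have hfx : (‖f p.1 x‖₊ : ℝ≥0∞) ≤ a p.1 := by
          rw [← enorm_eq_nnnorm, ← ofReal_norm]
          exact ENNReal.ofReal_le_ofReal ((hMf p.1 x).trans (le_abs_self _))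
        have hhz : (‖h' p.2 z‖₊ : ℝ≥0∞) ≤ b p.2 := by
          rw [← enorm_eq_nnnorm, ← ofReal_norm]
          exact ENNReal.ofReal_le_ofReal ((hMh' p.2 z).trans (le_abs_self _))
        gcongr
      calc ∫⁻ y, (‖(f p.1 x * f' p.1 y) * (h p.2 y * h' p.2 z)‖₊ : ℝ≥0∞) ∂μ₂
          ≤ ∫⁻ y, (a p.1 * b p.2) * ((‖f' p.1 y‖₊ : ℝ≥0∞) * ‖h p.2 y‖₊) ∂μ₂ :=
            lintegral_mono h1
        _ = (a p.1 * b p.2) * ∫⁻ y, (‖f' p.1 y‖₊ : ℝ≥0∞) * ‖h p.2 y‖₊ ∂μ₂ :=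
            lintegral_const_mul'' _ ((hf' p.1).1.enorm.mul ((hh p.2).1.enorm))
        _ ≤ (a p.1 * b p.2) * (eLpNorm (f' p.1) 2 μ₂ * eLpNorm (h p.2) 2 μ₂) := by
            gcongr
            exact holder_two (hf' p.1).1 (hh p.2).1
        _ = _ := by ring
    have hTsum : ∑' p : ℕ × ℕ, ∫⁻ y, (‖(f p.1 x * f' p.1 y) * (h p.2 y * h' p.2 z)‖₊ : ℝ≥0∞) ∂μ₂ ≠ ∞ := by
      have hps : ∑' p : ℕ × ℕ, (a p.1 * eLpNorm (f' p.1) 2 μ₂) * (b p.2 * eLpNorm (h p.2) 2 μ₂)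
          = (∑' j, a j * eLpNorm (f' j) 2 μ₂) * (∑' k, b k * eLpNorm (h k) 2 μ₂) := by
        rw [ENNReal.tsum_prod']
        simp_rw [ENNReal.tsum_mul_left]
        rw [ENNReal.tsum_mul_right]
      exact ne_top_of_le_ne_top (by rw [hps]; exact ENNReal.mul_ne_top hC1 hC2)
        (ENNReal.tsum_le_tsum hTb)
    have haeEq : (fun y => (∑' j, f j x * f' j y) * (∑' k, h k y * h' k z))
        =ᵐ[μ₂] fun y => ∑' p : ℕ × ℕ, (f p.1 x * f' p.1 y) * (h p.2 y * h' p.2 z) := by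
      filter_upwards [haeS1, haeS2] with y h1 h2
      exact tsum_mul_tsum_of_summable_norm (f := fun j => f j x * f' j y)
        (g := fun k => h k y * h' k z) h1 h2
    have hKint : Integrable (fun y => ∑' p : ℕ × ℕ, (f p.1 x * f' p.1 y) * (h p.2 y * h' p.2 z)) μ₂ := by
      constructor
      · set e : ℕ ≃ ℕ × ℕ := (Denumerable.eqv (ℕ × ℕ)).symm with he
        refine aestronglyMeasurable_of_tendsto_ae atTop
          (f := fun n y => ∑ i ∈ Finset.range n, (f (e i).1 x * f' (e i).1 y) * (h (e i).2 y * h' (e i).2 z))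
          (fun n => Finset.aestronglyMeasurable_fun_sum _ fun i _ => hTm (e i)) ?_
        filter_upwards [haeS1, haeS2] with y h1 h2
        have hs : Summable fun p : ℕ × ℕ => (f p.1 x * f' p.1 y) * (h p.2 y * h' p.2 z) :=
          summable_mul_of_summable_norm (f := fun j => f j x * f' j y)
            (g := fun k => h k y * h' k z) h1 h2
        exact (e.hasSum_iff.mpr hs.hasSum).tendsto_sum_nat
      · have hbd : ∀ᵐ y ∂μ₂, (‖∑' p : ℕ × ℕ, (f p.1 x * f' p.1 y) * (h p.2 y * h' p.2 z)‖₊ : ℝ≥0∞)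
            ≤ ∑' p : ℕ × ℕ, (‖(f p.1 x * f' p.1 y) * (h p.2 y * h' p.2 z)‖₊ : ℝ≥0∞) := by
          filter_upwards [haeS1, haeS2] with y h1 h2
          have hsn : Summable fun p : ℕ × ℕ => ‖(f p.1 x * f' p.1 y) * (h p.2 y * h' p.2 z)‖ :=
            Summable.mul_norm (f := fun j => f j x * f' j y)
              (g := fun k => h k y * h' k z) h1 h2
          have hsn' : Summable fun p : ℕ × ℕ => ‖(f p.1 x * f' p.1 y) * (h p.2 y * h' p.2 z)‖₊ := by
            rw [← NNReal.summable_coe]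
            simpa [coe_nnnorm] using hsn
          calc (‖∑' p : ℕ × ℕ, (f p.1 x * f' p.1 y) * (h p.2 y * h' p.2 z)‖₊ : ℝ≥0∞)
              ≤ ((∑' p : ℕ × ℕ, ‖(f p.1 x * f' p.1 y) * (h p.2 y * h' p.2 z)‖₊ : ℝ≥0) : ℝ≥0∞) :=
                ENNReal.coe_le_coe.2 (nnnorm_tsum_le hsn')
            _ = ∑' p : ℕ × ℕ, (‖(f p.1 x * f' p.1 y) * (h p.2 y * h' p.2 z)‖₊ : ℝ≥0∞) := ENNReal.coe_tsum hsn'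
        calc ∫⁻ y, (‖∑' p : ℕ × ℕ, (f p.1 x * f' p.1 y) * (h p.2 y * h' p.2 z)‖₊ : ℝ≥0∞) ∂μ₂
            ≤ ∫⁻ y, ∑' p : ℕ × ℕ, (‖(f p.1 x * f' p.1 y) * (h p.2 y * h' p.2 z)‖₊ : ℝ≥0∞) ∂μ₂ := lintegral_mono_ae hbd
          _ = ∑' p : ℕ × ℕ, ∫⁻ y, (‖(f p.1 x * f' p.1 y) * (h p.2 y * h' p.2 z)‖₊ : ℝ≥0∞) ∂μ₂ :=
              lintegral_tsum fun p => (hTm p).enorm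
          _ < ∞ := hTsum.lt_top
    refine ⟨hKint.congr haeEq.symm, ?_⟩
    calc ∫ y, (∑' j, f j x * f' j y) * (∑' k, h k y * h' k z) ∂μ₂
        = ∫ y, ∑' p : ℕ × ℕ, (f p.1 x * f' p.1 y) * (h p.2 y * h' p.2 z) ∂μ₂ := integral_congr_ae haeEq
      _ = ∑' p : ℕ × ℕ, ∫ y, (f p.1 x * f' p.1 y) * (h p.2 y * h' p.2 z) ∂μ₂ := integral_tsum hTm hTsum
      _ = ∑' p : ℕ × ℕ, (∫ y, f' p.1 y * h p.2 y ∂μ₂) * (f p.1 x * h' p.2 z) := by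
          refine tsum_congr fun p => ?_
          have e : (fun y => (f p.1 x * f' p.1 y) * (h p.2 y * h' p.2 z))
              = fun y => (f p.1 x * h' p.2 z) * (f' p.1 y * h p.2 y) := by
            funext y
            ring
          rw [e, integral_const_mul, mul_comm]
  refine ⟨fun x z => (key x z).1, fun x z => (key x z).2, ?_⟩
  · -- summability of the coefficient series
    have hprod : Summable fun p : ℕ × ℕ =>
        (|Mf p.1| * (eLpNorm (f' p.1) 2 μ₂).toReal)
          * (|Mh' p.2| * (eLpNorm (h p.2) 2 μ₂).toReal) :=
      hsum1.mul_of_nonneg hsum2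
        (fun j => mul_nonneg (abs_nonneg _) ENNReal.toReal_nonneg)
        (fun k => mul_nonneg (abs_nonneg _) ENNReal.toReal_nonneg)
    refine Summable.of_norm_bounded hprod fun p => ?_
    have habs : ‖‖∫ y, f' p.1 y * h p.2 y ∂μ₂‖ * Mf p.1 * Mh' p.2‖
        = ‖∫ y, f' p.1 y * h p.2 y ∂μ₂‖ * |Mf p.1| * |Mh' p.2| := by
      rw [Real.norm_eq_abs, abs_mul, abs_mul, abs_of_nonneg (norm_nonneg _)]
    rw [habs]
    calc ‖∫ y, f' p.1 y * h p.2 y ∂μ₂‖ * |Mf p.1| * |Mh' p.2|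
        ≤ ((eLpNorm (f' p.1) 2 μ₂).toReal * (eLpNorm (h p.2) 2 μ₂).toReal)
            * |Mf p.1| * |Mh' p.2| :=
          mul_le_mul_of_nonneg_right
            (mul_le_mul_of_nonneg_right (hInt p.1 p.2) (abs_nonneg _)) (abs_nonneg _)
      _ = (|Mf p.1| * (eLpNorm (f' p.1) 2 μ₂).toReal)
            * (|Mh' p.2| * (eLpNorm (h p.2) 2 μ₂).toReal) := by ring
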